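/- Let m be a positive integer with 2‖m (i.e., m ≡ 2 mod 4). Let A, B ⊆ Z_m with A ∪ B = Z_m and |A ∩ B| = m - 4. Then R_A(n) = R_B(n) for all n ∈ Z_m if and only if B = A + m/2. -/

import Mathlib

open Finset

/-- Representation function: number of ordered pairs (a, a') in A × A with a + a' = n. -/
def repFn {m : ℕ} (A : Finset (ZMod m)) (n : ZMod m) : ℕ :=
  ((A ×ˢ A).filter (fun p => p.1 + p.2 = n)).card

lemma repFn_eq_sum {m : ℕ} (A : Finset (ZMod m)) (n : ZMod m) :
    repFn A n = ∑ a ∈ A, ∑ b ∈ A, (if a + b = n then 1 else 0) := by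
  rw [repFn, Finset.card_filter, Finset.sum_product]

lemma repFn_translate {m : ℕ} (A : Finset (ZMod m)) (h n : ZMod m) (h2 : h + h = 0) :
    repFn (A.image (fun x => x + h)) n = repFn A n := by
  unfold repFn
  apply Finset.card_nbij' (fun p => (p.1 + h, p.2 + h)) (fun p => (p.1 + h, p.2 + h))
  · simp only [Set.MapsTo, Finset.mem_coe]; intro p hp
    simp only [mem_filter, mem_product, mem_image] at hp ⊢
    obtain ⟨⟨⟨a, ha, hae⟩, ⟨b, hb, hbe⟩⟩, hs⟩ := hp
    refine ⟨⟨?_, ?_⟩, by rw [add_add_add_comm, h2, add_zero, hs]⟩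
    · rw [← hae, add_assoc, h2, add_zero]; exact ha
    · rw [← hbe, add_assoc, h2, add_zero]; exact hb
  · simp only [Set.MapsTo, Finset.mem_coe]; intro p hp
    simp only [mem_filter, mem_product, mem_image] at hp ⊢
    obtain ⟨⟨h1, h2'⟩, hs⟩ := hp
    exact ⟨⟨⟨p.1, h1, rfl⟩, ⟨p.2, h2', rfl⟩⟩, by rw [add_add_add_comm, h2, add_zero, hs]⟩
  · intro p hp; simp [add_assoc, h2]
  · intro p hp; simp [add_assoc, h2]

lemma half_add_half (m : ℕ) (hm : m % 4 = 2) [NeZero m] :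
    ((m / 2 : ℕ) : ZMod m) + ((m / 2 : ℕ) : ZMod m) = 0 := by
  rw [← Nat.cast_add]
  have : m / 2 + m / 2 = m := by omega
  rw [this, ZMod.natCast_self]

lemma two_ne_half (m : ℕ) (hm : m % 4 = 2) (x : ZMod m) :
    x + x ≠ ((m / 2 : ℕ) : ZMod m) := by
  intro hx
  have h2 : (2 : ℕ) ∣ m := by omega
  have := congrArg (ZMod.castHom h2 (ZMod 2)) hx
  simp only [map_add, map_natCast] at this
  obtain ⟨k, hk⟩ : ∃ k, m / 2 = 2 * k + 1 := ⟨m / 4, by omega⟩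
  rw [hk] at this
  push_cast at this
  rw [CharTwo.add_self_eq_zero, show ((2:ZMod 2)) = 0 by rfl, zero_mul, zero_add] at this
  exact zero_ne_one this

lemma order_two (m : ℕ) [NeZero m] (hm : m % 4 = 2) (z : ZMod m) (hz : z + z = 0) :
    z = 0 ∨ z = ((m / 2 : ℕ) : ZMod m) := by
  have hid : ((z.val : ℕ) : ZMod m) = z := by rw [ZMod.natCast_val, ZMod.cast_id]
  have hv : ((z.val + z.val : ℕ) : ZMod m) = 0 := by push_cast [hid]; rw [hz]
  rw [ZMod.natCast_eq_zero_iff] at hv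
  have hlt : z.val < m := ZMod.val_lt z
  obtain ⟨k, hk⟩ := hv
  have hk2 : k ≤ 1 := by nlinarith
  have : z.val = 0 ∨ z.val = m / 2 := by interval_cases k <;> omega
  rcases this with h | h
  · left; rw [← hid, h]; simp
  · right; rw [← hid, h]

lemma two_eq_two (m : ℕ) [NeZero m] (hm : m % 4 = 2) (x y : ZMod m) (hxy : x + x = y + y) :
    x = y ∨ x = y + ((m / 2 : ℕ) : ZMod m) := by
  have := order_two m hm (x - y) (by ring_nf; linear_combination hxy)
  rcases this with h | h
  · left; linear_combination h
  · right; linear_combination h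

lemma repFn_pair {m : ℕ} (x y : ZMod m) (hxy : x ≠ y) (n : ZMod m) :
    repFn {x, y} n = (if x + x = n then 1 else 0) + (if x + y = n then 1 else 0)
      + ((if y + x = n then 1 else 0) + (if y + y = n then 1 else 0)) := by
  rw [repFn_eq_sum, Finset.sum_pair hxy, Finset.sum_pair hxy, Finset.sum_pair hxy]

lemma key {m : ℕ} (h : ZMod m) (h2 : h + h = 0) (hnh : ∀ x : ZMod m, x + x ≠ h)
    (hord : ∀ x y : ZMod m, x + x = y + y → x = y ∨ x = y + h)
    (c1 c2 d1 d2 : ZMod m) (hc : c1 ≠ c2) (hd : d1 ≠ d2)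
    (h11 : d1 ≠ c1) (h12 : d1 ≠ c2) (h21 : d2 ≠ c1) (h22 : d2 ≠ c2)
    (hrep : ∀ n, repFn {c1, c2} n = repFn {d1, d2} n) :
    (d1 = c1 + h ∧ d2 = c2 + h) ∨ (d1 = c2 + h ∧ d2 = c1 + h) := by
  have e1 := hrep (d1 + d2)
  rw [repFn_pair c1 c2 hc, repFn_pair d1 d2 hd, add_comm c2 c1, add_comm d2 d1,
    if_pos rfl, if_neg (fun hq => hd (add_left_cancel hq)),
    if_neg (fun hq => hd (add_right_cancel hq).symm)] at e1
  by_cases hs : c1 + c2 = d1 + d2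
  · -- Case 1 : s = t
    have e2 := hrep (c1 + c1)
    rw [repFn_pair c1 c2 hc, repFn_pair d1 d2 hd, add_comm c2 c1, add_comm d2 d1,
      if_pos rfl, if_neg (fun hq => hc (add_left_cancel hq).symm),
      if_neg (fun hq => hc (add_left_cancel (hs.trans hq)).symm)] at e2
    by_cases hcc : c2 + c2 = c1 + c1
    · have hd1 : d1 + d1 = c1 + c1 := by
        by_contra hq; rw [if_pos hcc, if_neg hq] at e2; split_ifs at e2 <;> omega
      have hc2 : c2 = c1 + h := by
        rcases hord c2 c1 hcc with h' | h'
        · exact absurd h' hc.symm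
        · exact h'
      rcases hord d1 c1 hd1 with h' | h'
      · exact absurd h' h11
      · exact absurd (h'.trans hc2.symm) h12
    · by_cases hd1 : d1 + d1 = c1 + c1
      · have hd1e : d1 = c1 + h := by
          rcases hord d1 c1 hd1 with h' | h'
          · exact absurd h' h11
          · exact h'
        exact Or.inl ⟨hd1e, by linear_combination -hs - hd1e - h2⟩
      · have hd2 : d2 + d2 = c1 + c1 := by
          by_contra hq; rw [if_neg hcc, if_neg hd1, if_neg hq] at e2; omega
        have hd2e : d2 = c1 + h := by
          rcases hord d2 c1 hd2 with h' | h'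
          · exact absurd h' h21
          · exact h'
        exact Or.inr ⟨by linear_combination -hs - hd2e - h2, hd2e⟩
  · -- Case 2 : s ≠ t, forces 2c1 = t = 2c2
    have hA1 : c1 + c1 = d1 + d2 := by
      by_contra hq; rw [if_neg hs, if_neg hq] at e1; split_ifs at e1 <;> omega
    have hA2 : c2 + c2 = d1 + d2 := by
      by_contra hq; rw [if_neg hs, if_neg hq] at e1; split_ifs at e1 <;> omega
    have hc1 : c1 = c2 + h := by
      rcases hord c1 c2 (hA1.trans hA2.symm) with h' | h'
      · exact absurd h' hc
      · exact h'
    have e3 := hrep (c1 + c2)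
    rw [repFn_pair c1 c2 hc, repFn_pair d1 d2 hd, add_comm c2 c1, add_comm d2 d1,
      if_pos rfl, if_neg (fun hq => hc (add_left_cancel hq)),
      if_neg (show ¬(c2 + c2 = c1 + c2) from fun hq => hc (add_right_cancel hq).symm),
      if_neg (show ¬(d1 + d2 = c1 + c2) from fun hq => hs hq.symm)] at e3
    have h2d1 : d1 + d1 = c1 + c2 := by
      by_contra hq; rw [if_neg hq] at e3; split_ifs at e3 <;> omega
    exact absurd (by linear_combination h2d1 + hc1 : d1 - c2 + (d1 - c2) = h) (hnh (d1 - c2))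

lemma inner_univ {m : ℕ} [NeZero m] (n a : ZMod m) :
    ∑ b ∈ (univ : Finset (ZMod m)), (if a + b = n then 1 else 0) = 1 := by
  rw [← Finset.card_filter]
  have : (univ : Finset (ZMod m)).filter (fun b => a + b = n) = {n - a} := by
    ext b; simp [eq_sub_iff_add_eq']
  rw [this, card_singleton]

lemma outer_univ {m : ℕ} [NeZero m] (n b : ZMod m) :
    ∑ a ∈ (univ : Finset (ZMod m)), (if a + b = n then 1 else 0) = 1 := by
  rw [← Finset.card_filter]
  have : (univ : Finset (ZMod m)).filter (fun a => a + b = n) = {n - b} := by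
    ext a; simp [sub_eq_iff_eq_add, eq_sub_iff_add_eq]
  rw [this, card_singleton]

lemma sum_repFn {m : ℕ} [NeZero m] (A : Finset (ZMod m)) :
    ∑ n : ZMod m, repFn A n = A.card * A.card := by
  simp only [repFn]
  rw [← Finset.card_eq_sum_card_fiberwise (f := fun p : ZMod m × ZMod m => p.1 + p.2)
    (t := univ) (fun x _ => mem_univ _)]
  rw [Finset.card_product]

lemma cancel {m : ℕ} [NeZero m] (I C D : Finset (ZMod m))
    (hIC : Disjoint I C) (hID : Disjoint I D) (hCD : Disjoint C D)
    (hU : I ∪ C ∪ D = univ) (hcard : C.card = D.card) (n : ZMod m)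
    (hn : repFn (I ∪ C) n = repFn (I ∪ D) n) : repFn C n = repFn D n := by
  have hICD : Disjoint (I ∪ C) D := Finset.disjoint_union_left.mpr ⟨hID, hCD⟩
  rw [repFn_eq_sum, repFn_eq_sum] at hn
  simp only [Finset.sum_union hIC, Finset.sum_union hID, Finset.sum_add_distrib] at hn
  have col : ∀ S : Finset (ZMod m),
      ((∑ a ∈ I, ∑ b ∈ S, if a + b = n then 1 else 0) +
       (∑ a ∈ C, ∑ b ∈ S, if a + b = n then 1 else 0)) +
       (∑ a ∈ D, ∑ b ∈ S, if a + b = n then 1 else 0) = S.card := by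
    intro S
    have h1 : ∑ a ∈ (univ : Finset (ZMod m)), ∑ b ∈ S, (if a + b = n then 1 else 0)
        = S.card := by
      rw [Finset.sum_comm]
      rw [Finset.sum_congr rfl (fun b _ => outer_univ n b), Finset.sum_const, smul_eq_mul,
        mul_one]
    rw [← h1, ← hU, Finset.sum_union hICD, Finset.sum_union hIC]
  have row : ∀ S : Finset (ZMod m),
      ((∑ a ∈ S, ∑ b ∈ I, if a + b = n then 1 else 0) +
       (∑ a ∈ S, ∑ b ∈ C, if a + b = n then 1 else 0)) +
       (∑ a ∈ S, ∑ b ∈ D, if a + b = n then 1 else 0) = S.card := by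
    intro S
    have h1 : ∑ a ∈ S, ∑ b ∈ (univ : Finset (ZMod m)), (if a + b = n then 1 else 0)
        = S.card := by
      rw [Finset.sum_congr rfl (fun a _ => inner_univ n a), Finset.sum_const, smul_eq_mul,
        mul_one]
    rw [← h1, ← hU]
    rw [← Finset.sum_add_distrib, ← Finset.sum_add_distrib]
    exact Finset.sum_congr rfl (fun a _ => by
      rw [Finset.sum_union hICD, Finset.sum_union hIC])
  have colC := col C
  have colD := col D
  have rowC := row C
  have rowD := row D
  rw [repFn_eq_sum, repFn_eq_sum]
  omega

lemma case_two : ∀ A B : Finset (ZMod 2), A ∪ B = univ → (A ∩ B).card = 2 - 4 →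
    (∀ n, repFn A n = repFn B n) → B = A.image (fun x => x + ((2 / 2 : ℕ) : ZMod 2)) := by
  decide

theorem stmt9 (m : ℕ) [NeZero m] (hm : m % 4 = 2)
    (A B : Finset (ZMod m)) (hU : A ∪ B = Finset.univ) (hI : (A ∩ B).card = m - 4) :
    (∀ n : ZMod m, repFn A n = repFn B n) ↔
      B = A.image (fun x => x + ((m / 2 : ℕ) : ZMod m)) := by
  have h2 : ((m / 2 : ℕ) : ZMod m) + ((m / 2 : ℕ) : ZMod m) = 0 := half_add_half m hm
  constructor
  · intro hf
    rcases (show m = 2 ∨ 6 ≤ m by omega) with hm2 | hm6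
    · subst hm2
      exact case_two A B hU hI hf
    · -- main case
      set h : ZMod m := ((m / 2 : ℕ) : ZMod m) with hh
      have hcardU : (univ : Finset (ZMod m)).card = m := by
        rw [Finset.card_univ, ZMod.card]
      -- |A| = |B|
      have hsum : A.card * A.card = B.card * B.card := by
        rw [← sum_repFn A, ← sum_repFn B]
        exact Finset.sum_congr rfl (fun n _ => hf n)
      have hAB : A.card = B.card := Nat.mul_self_inj.mp hsum
      have hcup : (A ∪ B).card + (A ∩ B).card = A.card + B.card :=
        Finset.card_union_add_card_inter A B
      rw [hU, hcardU, hI] at hcup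
      have hAc : A.card = m - 2 := by omega
      have hCc : (A \ B).card = 2 := by
        have := Finset.card_inter_add_card_sdiff A B
        omega
      have hDc : (B \ A).card = 2 := by
        have := Finset.card_inter_add_card_sdiff B A
        rw [Finset.inter_comm] at this
        omega
      obtain ⟨c1, c2, hc, hC⟩ := Finset.card_eq_two.mp hCc
      obtain ⟨d1, d2, hd, hD⟩ := Finset.card_eq_two.mp hDc
      have hmem : ∀ x : ZMod m, x ∈ A ∨ x ∈ B := by
        intro x
        have : x ∈ A ∪ B := by rw [hU]; exact mem_univ x
        exact Finset.mem_union.mp this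
      -- disjointness and union facts
      have hIC : Disjoint (A ∩ B) (A \ B) := by
        rw [Finset.disjoint_left]; intro x hx hx'
        exact (Finset.mem_sdiff.mp hx').2 (Finset.mem_inter.mp hx).2
      have hID : Disjoint (A ∩ B) (B \ A) := by
        rw [Finset.disjoint_left]; intro x hx hx'
        exact (Finset.mem_sdiff.mp hx').2 (Finset.mem_inter.mp hx).1
      have hCD : Disjoint (A \ B) (B \ A) := by
        rw [Finset.disjoint_left]; intro x hx hx'
        exact (Finset.mem_sdiff.mp hx').2 (Finset.mem_sdiff.mp hx).1
      have hUd : (A ∩ B) ∪ (A \ B) ∪ (B \ A) = univ := by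
        ext x
        simp only [Finset.mem_union, Finset.mem_inter, Finset.mem_sdiff, Finset.mem_univ,
          iff_true]
        rcases hmem x with hx | hx
        · by_cases hxB : x ∈ B
          · exact Or.inl (Or.inl ⟨hx, hxB⟩)
          · exact Or.inl (Or.inr ⟨hx, hxB⟩)
        · by_cases hxA : x ∈ A
          · exact Or.inl (Or.inl ⟨hxA, hx⟩)
          · exact Or.inr ⟨hx, hxA⟩
      have hAeq : A = (A ∩ B) ∪ (A \ B) := by
        ext x
        simp only [Finset.mem_union, Finset.mem_inter, Finset.mem_sdiff]
        by_cases hxB : x ∈ B <;> tauto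
      have hBeq : B = (A ∩ B) ∪ (B \ A) := by
        ext x
        simp only [Finset.mem_union, Finset.mem_inter, Finset.mem_sdiff]
        by_cases hxA : x ∈ A <;> tauto
      have hrepCD : ∀ n, repFn (A \ B) n = repFn (B \ A) n := by
        intro n
        apply cancel (A ∩ B) (A \ B) (B \ A) hIC hID hCD hUd (by omega) n
        rw [← hAeq, ← hBeq]; exact hf n
      rw [hC, hD] at hrepCD
      -- disjointness of the four elements
      have hdisj : d1 ≠ c1 ∧ d1 ≠ c2 ∧ d2 ≠ c1 ∧ d2 ≠ c2 := by
        have h1 : d1 ∈ B \ A := by rw [hD]; exact Finset.mem_insert_self _ _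
        have h2' : d2 ∈ B \ A := by rw [hD]; simp
        have h3 : c1 ∈ A \ B := by rw [hC]; exact Finset.mem_insert_self _ _
        have h4 : c2 ∈ A \ B := by rw [hC]; simp
        refine ⟨?_, ?_, ?_, ?_⟩ <;> rintro rfl
        · exact Finset.disjoint_left.mp hCD h3 h1
        · exact Finset.disjoint_left.mp hCD h4 h1
        · exact Finset.disjoint_left.mp hCD h3 h2'
        · exact Finset.disjoint_left.mp hCD h4 h2'
      obtain ⟨h11, h12, h21, h22⟩ := hdisj
      have hkey := key h h2 (two_ne_half m hm) (two_eq_two m hm) c1 c2 d1 d2 hc hd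
        h11 h12 h21 h22 hrepCD
      have hDset : ({d1, d2} : Finset (ZMod m)) = {c1 + h, c2 + h} := by
        rcases hkey with ⟨e1, e2⟩ | ⟨e1, e2⟩
        · rw [e1, e2]
        · rw [e1, e2, Finset.pair_comm]
      -- final set equality
      have himg : ∀ x : ZMod m, x ∈ A.image (fun y => y + h) ↔ x + h ∈ A := by
        intro x
        simp only [Finset.mem_image]
        constructor
        · rintro ⟨a, ha, rfl⟩
          rwa [add_assoc, h2, add_zero]
        · intro hx
          exact ⟨x + h, hx, by rw [add_assoc, h2, add_zero]⟩
      ext x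
      rw [himg x]
      have hxB : x ∈ B ↔ x ∉ A \ B := by
        constructor
        · intro hx hx'; exact (Finset.mem_sdiff.mp hx').2 hx
        · intro hx
          rcases hmem x with hx' | hx'
          · by_contra hxB
            exact hx (Finset.mem_sdiff.mpr ⟨hx', hxB⟩)
          · exact hx'
      have hxA : x + h ∈ A ↔ x + h ∉ B \ A := by
        constructor
        · intro hx hx'; exact (Finset.mem_sdiff.mp hx').2 hx
        · intro hx
          rcases hmem (x + h) with hx' | hx'
          · exact hx'
          · by_contra hxA
            exact hx (Finset.mem_sdiff.mpr ⟨hx', hxA⟩)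
      rw [hxB, hxA, hC, hD, hDset]
      simp only [Finset.mem_insert, Finset.mem_singleton]
      constructor
      · intro hx hx'
        rcases hx' with h' | h'
        · exact hx (Or.inl (add_right_cancel h'))
        · exact hx (Or.inr (add_right_cancel h'))
      · intro hx hx'
        rcases hx' with h' | h'
        · exact hx (Or.inl (by rw [h']))
        · exact hx (Or.inr (by rw [h']))
  · intro hB n
    rw [hB, repFn_translate A _ n h2]
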